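/- Let Γ and Σ be connected simple graphs on finite vertex sets V and W respectively, with |V| = |W| and with the same number of edges, and let ψ : V → W be a bijection. Then there exists a finite sequence of edge slides transforming Γ into a graph Γ̃ on the vertex set V such that ψ is a graph isomorphism from Γ̃ to Σ, i.e., for all x, y ∈ V, x is adjacent to y in Γ̃ if and only if ψ(x) is adjacent to ψ(y) in Σ. -/

import Mathlib

/-- An edge slide: given distinct vertices `x, y, z` with `x ~ y`, `y ~ z` and `x ≁ z`,
slide the edge `xy` to `xz`. -/
def EdgeSlide {V : Type*} (G G' : SimpleGraph V) : Prop :=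
  ∃ x y z : V, x ≠ z ∧ G.Adj x y ∧ G.Adj y z ∧ ¬ G.Adj x z ∧
    G' = G.deleteEdges {s(x, y)} ⊔ SimpleGraph.fromEdgeSet {s(x, z)}

namespace EdgeSlideAux

open SimpleGraph

/-! ### Set identities -/

section SetLemmas

variable {α : Type*} {E F : Set α} {p q r : α}

lemma setI1 (hp : p ∈ E) (hrp : r ≠ p) (hrq : r ≠ q) :
    ((E \ {p}) ∪ {q}) \ {r} ∪ {p} = (E \ {r}) ∪ {q} := by
  ext e
  simp only [Set.mem_union, Set.mem_diff, Set.mem_singleton_iff]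
  constructor
  · rintro (⟨⟨he, _⟩ | rfl, her⟩ | rfl)
    · exact Or.inl ⟨he, her⟩
    · exact Or.inr rfl
    · exact Or.inl ⟨hp, fun h => hrp h.symm⟩
  · rintro (⟨he, her⟩ | rfl)
    · by_cases hep : e = p
      · exact Or.inr hep
      · exact Or.inl ⟨Or.inl ⟨he, hep⟩, her⟩
    · exact Or.inl ⟨Or.inr rfl, fun h => hrq h.symm⟩

lemma setI2 (hq : q ∉ E) :
    ((E \ {p}) ∪ {q}) \ {q} ∪ {r} = (E \ {p}) ∪ {r} := by
  ext e
  simp only [Set.mem_union, Set.mem_diff, Set.mem_singleton_iff]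
  constructor
  · rintro (⟨⟨he, hep⟩ | rfl, heq⟩ | rfl)
    · exact Or.inl ⟨he, hep⟩
    · exact absurd rfl heq
    · exact Or.inr rfl
  · rintro (⟨he, hep⟩ | rfl)
    · exact Or.inl ⟨Or.inl ⟨he, hep⟩, fun h => hq (h ▸ he)⟩
    · exact Or.inr rfl

lemma setI0 (hp : p ∈ E) (hq : q ∉ E) :
    ((E \ {p}) ∪ {q}) \ {q} ∪ {p} = E := by
  rw [setI2 hq, Set.diff_union_of_subset (Set.singleton_subset_iff.mpr hp)]

lemma setI3 (hq : q ∈ F) :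
    ((E \ {p}) ∪ {q}) \ F = (E \ F) \ {p} := by
  ext e
  simp only [Set.mem_union, Set.mem_diff, Set.mem_singleton_iff]
  constructor
  · rintro (⟨⟨he, hep⟩ | rfl, heF⟩)
    · exact ⟨⟨he, heF⟩, hep⟩
    · exact absurd hq heF
  · rintro ⟨⟨he, heF⟩, hep⟩
    exact ⟨Or.inl ⟨he, hep⟩, heF⟩

end SetLemmas

/-! ### The `mv` operation -/

variable {V : Type*}

/-- Delete edge `s(x,y)`, add edge `s(a,b)`. -/
def mv (G : SimpleGraph V) (x y a b : V) : SimpleGraph V :=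
  G.deleteEdges {s(x, y)} ⊔ SimpleGraph.fromEdgeSet {s(a, b)}

lemma mv_edgeSet (G : SimpleGraph V) (x y : V) {a b : V} (hab : a ≠ b) :
    (mv G x y a b).edgeSet = (G.edgeSet \ {s(x, y)}) ∪ {s(a, b)} := by
  rw [mv, edgeSet_sup, edgeSet_deleteEdges, edgeSet_fromEdgeSet]
  congr 1
  ext e
  simp only [Set.mem_diff, Set.mem_singleton_iff, Set.mem_setOf_eq, and_iff_left_iff_imp]
  rintro rfl
  simpa using hab

lemma mv_adj {G : SimpleGraph V} {x y a b : V} (hab : a ≠ b) {u w : V} :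
    (mv G x y a b).Adj u w ↔ (G.Adj u w ∧ s(u, w) ≠ s(x, y)) ∨ s(u, w) = s(a, b) := by
  rw [← SimpleGraph.mem_edgeSet, mv_edgeSet G x y hab, Set.mem_union, Set.mem_diff,
    Set.mem_singleton_iff, Set.mem_singleton_iff, SimpleGraph.mem_edgeSet]

lemma mv_swap_left (G : SimpleGraph V) (x y a b : V) : mv G x y a b = mv G y x a b := by
  unfold mv
  rw [Sym2.eq_swap]

lemma mv_swap_right (G : SimpleGraph V) (x y a b : V) : mv G x y a b = mv G x y b a := by
  unfold mv
  rw [show s(a, b) = s(b, a) from Sym2.eq_swap]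

lemma slide_mv {G : SimpleGraph V} {x y z : V} (hxz : x ≠ z) (h1 : G.Adj x y)
    (h2 : G.Adj y z) (h3 : ¬ G.Adj x z) : EdgeSlide G (mv G x y x z) :=
  ⟨x, y, z, hxz, h1, h2, h3, rfl⟩

lemma edgeSlide_symm {G G' : SimpleGraph V} (h : EdgeSlide G G') : EdgeSlide G' G := by
  obtain ⟨x, y, z, hxz, h1, h2, h3, rfl⟩ := h
  have hG' : (G.deleteEdges {s(x, y)} ⊔ SimpleGraph.fromEdgeSet {s(x, z)}) = mv G x y x z := rfl
  rw [hG']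
  have hyz : y ≠ z := fun h => h3 (h ▸ h1)
  have hxy : x ≠ y := h1.ne
  have hexy : s(x, y) ≠ s(x, z) := by
    rw [Ne, Sym2.eq_iff]
    rintro (⟨h', h''⟩ | ⟨h', h''⟩) <;> simp_all
  refine ⟨x, z, y, hxy, ?_, ?_, ?_, ?_⟩
  · exact (mv_adj hxz).mpr (Or.inr rfl)
  · refine (mv_adj hxz).mpr (Or.inl ⟨h2.symm, ?_⟩)
    rw [Ne, Sym2.eq_iff]
    rintro (⟨h', h''⟩ | ⟨h', h''⟩) <;> simp_all
  · rw [mv_adj hxz]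
    rintro (⟨_, h⟩ | h)
    · exact h rfl
    · exact hexy h
  · have : mv (mv G x y x z) x z x y = G := by
      apply SimpleGraph.edgeSet_inj.mp
      rw [mv_edgeSet _ _ _ hxy, mv_edgeSet _ _ _ hxz]
      exact setI0 ((G.mem_edgeSet).mpr h1) (fun h => h3 (G.mem_edgeSet.mp h))
    exact this.symm

lemma rtg_symm {G G' : SimpleGraph V} (h : Relation.ReflTransGen EdgeSlide G G') :
    Relation.ReflTransGen EdgeSlide G' G :=
  @Std.Symm.symm _ _ (@Relation.ReflTransGen.stdSymm _ _ ⟨fun _ _ => edgeSlide_symm⟩) _ _ h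

/-! ### Invariants -/

lemma reachable_of_forall {G G' : SimpleGraph V} (h : ∀ u w, G.Adj u w → G'.Reachable u w)
    {u v : V} (huv : G.Reachable u v) : G'.Reachable u v := by
  obtain ⟨p⟩ := huv
  induction p with
  | nil => exact SimpleGraph.Reachable.refl _
  | cons ha _ ih => exact (h _ _ ha).trans ih

lemma connected_of_forall {G G' : SimpleGraph V} (hG : G.Connected)
    (h : ∀ u w, G.Adj u w → G'.Reachable u w) : G'.Connected := by
  have : Nonempty V := hG.nonempty
  exact ⟨fun u v => reachable_of_forall h (hG.preconnected u v)⟩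

lemma edgeSlide_connected {G G' : SimpleGraph V} (h : EdgeSlide G G') (hG : G.Connected) :
    G'.Connected := by
  obtain ⟨x, y, z, hxz, h1, h2, h3, rfl⟩ := h
  have hG' : (G.deleteEdges {s(x, y)} ⊔ SimpleGraph.fromEdgeSet {s(x, z)}) = mv G x y x z := rfl
  rw [hG']
  have hyz : y ≠ z := fun h => h3 (h ▸ h1)
  apply connected_of_forall hG
  intro u w huw
  by_cases he : s(u, w) = s(x, y)
  · have hxzadj : (mv G x y x z).Adj x z := (mv_adj hxz).mpr (Or.inr rfl)
    have hzy : (mv G x y x z).Adj z y := by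
      refine (mv_adj hxz).mpr (Or.inl ⟨h2.symm, ?_⟩)
      rw [Ne, Sym2.eq_iff]
      rintro (⟨h', h''⟩ | ⟨h', h''⟩) <;> simp_all
    have hxy : (mv G x y x z).Reachable x y := (hxzadj.reachable).trans hzy.reachable
    rcases Sym2.eq_iff.mp he with ⟨h', h''⟩ | ⟨h', h''⟩
    all_goals subst h'; subst h''
    · exact hxy
    · exact hxy.symm
  · exact ((mv_adj hxz).mpr (Or.inl ⟨huw, he⟩)).reachable

lemma mv_ncard [Finite V] {G : SimpleGraph V} {x y a b : V} (hxy : G.Adj x y)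
    (hnab : ¬ G.Adj a b) (hab : a ≠ b) :
    (mv G x y a b).edgeSet.ncard = G.edgeSet.ncard := by
  rw [mv_edgeSet G x y hab, Set.union_singleton,
    Set.ncard_insert_of_notMem (by simp [SimpleGraph.mem_edgeSet, hnab]),
    Set.ncard_diff_singleton_add_one ((G.mem_edgeSet).mpr hxy)]

lemma edgeSlide_ncard [Finite V] {G G' : SimpleGraph V} (h : EdgeSlide G G') :
    G'.edgeSet.ncard = G.edgeSet.ncard := by
  obtain ⟨x, y, z, hxz, h1, h2, h3, rfl⟩ := h
  exact mv_ncard h1 h3 hxz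

lemma rtg_ncard [Finite V] {G G' : SimpleGraph V} (h : Relation.ReflTransGen EdgeSlide G G') :
    G'.edgeSet.ncard = G.edgeSet.ncard := by
  induction h with
  | refl => rfl
  | tail _ hstep ih => rw [edgeSlide_ncard hstep, ih]


lemma crossing_walk {G : SimpleGraph V} {A : Set V} : ∀ {a b : V}, G.Walk a b → a ∈ A → b ∉ A →
    ∃ y ∈ A, ∃ z, z ∉ A ∧ G.Adj y z := by
  intro a b p
  induction p with
  | nil => intro h1 h2; exact absurd h1 h2
  | @cons u v w hadj p ih =>
    intro h1 h2
    by_cases hv : v ∈ A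
    · exact ih hv h2
    · exact ⟨u, h1, v, hv, hadj⟩

/-- `v0` is a universal vertex. -/
def Univ (G : SimpleGraph V) (v0 : V) : Prop := ∀ z, z ≠ v0 → G.Adj v0 z

lemma phaseA [Finite V] (v0 : V) : ∀ (n : ℕ) (G : SimpleGraph V), G.Connected →
    {z | z ≠ v0 ∧ ¬ G.Adj v0 z}.ncard = n →
    ∃ G', Relation.ReflTransGen EdgeSlide G G' ∧ G'.Connected ∧ Univ G' v0 := by
  intro n
  induction n using Nat.strong_induction_on with
  | _ n ih =>
  intro G hc hn
  by_cases hU : Univ G v0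
  · exact ⟨G, .refl, hc, hU⟩
  · have hU' : ¬ ∀ z, z ≠ v0 → G.Adj v0 z := hU
    push_neg at hU'
    obtain ⟨z, hz, hnadj⟩ := hU'
    have haA : v0 ∈ {w | w = v0 ∨ G.Adj v0 w} := Or.inl rfl
    have hzA : z ∉ {w | w = v0 ∨ G.Adj v0 w} := by
      rintro (h | h)
      exacts [hz h, hnadj h]
    obtain ⟨y, hyA, w, hwA, hyw⟩ := crossing_walk ((hc.preconnected v0 z).some) haA hzA
    have hyv0 : y ≠ v0 := by
      rintro rfl
      exact hwA (Or.inr hyw)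
    have hadjv0y : G.Adj v0 y := by
      rcases hyA with h | h
      · exact absurd h hyv0
      · exact h
    have hwv0 : w ≠ v0 := fun h => hwA (Or.inl h)
    have hnadjv0w : ¬ G.Adj v0 w := fun h => hwA (Or.inr h)
    have hslide : EdgeSlide G (mv G w y w v0) :=
      slide_mv hwv0 hyw.symm hadjv0y.symm (fun h => hnadjv0w h.symm)
    have hc' := edgeSlide_connected hslide hc
    have hyw' : y ≠ w := hyw.ne
    have hset : {z' | z' ≠ v0 ∧ ¬ (mv G w y w v0).Adj v0 z'} =
        {z' | z' ≠ v0 ∧ ¬ G.Adj v0 z'} \ {w} := by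
      ext u
      simp only [Set.mem_setOf_eq, Set.mem_diff, Set.mem_singleton_iff, mv_adj hwv0]
      constructor
      · rintro ⟨hu, hadj⟩
        refine ⟨⟨hu, fun h => hadj (Or.inl ⟨h, ?_⟩)⟩, fun h => hadj (Or.inr ?_)⟩
        · rw [Ne, Sym2.eq_iff]
          rintro (⟨h1, h2⟩ | ⟨h1, h2⟩) <;> simp_all
        · subst h
          exact Sym2.eq_swap
      · rintro ⟨⟨hu, hnadj'⟩, huw⟩
        refine ⟨hu, ?_⟩
        rintro (⟨h, _⟩ | h)
        · exact hnadj' h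
        · rcases Sym2.eq_iff.mp h with ⟨h1, h2⟩ | ⟨h1, h2⟩ <;> simp_all
    have hmem : w ∈ {z' | z' ≠ v0 ∧ ¬ G.Adj v0 z'} := ⟨hwv0, hnadjv0w⟩
    have hlt : ({z' | z' ≠ v0 ∧ ¬ (mv G w y w v0).Adj v0 z'}).ncard < n := by
      rw [hset, ← hn]
      exact Set.ncard_diff_singleton_lt_of_mem hmem
    obtain ⟨G', hsteps, hc'', hU2⟩ := ih _ hlt (mv G w y w v0) hc' rfl
    exact ⟨G', Relation.ReflTransGen.head hslide hsteps, hc'', hU2⟩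

lemma sym2_ne {x y a b : V} (h1 : x = a → y = b → False) (h2 : x = b → y = a → False) :
    s(x, y) ≠ s(a, b) := by
  rw [Ne, Sym2.eq_iff]
  rintro (⟨ha', hb'⟩ | ⟨ha', hb'⟩)
  exacts [h1 ha' hb', h2 ha' hb']

lemma univ_mv {G : SimpleGraph V} {v0 x y a b : V} (hU : Univ G v0) (hx : x ≠ v0) (hy : y ≠ v0)
    (hab : a ≠ b) : Univ (mv G x y a b) v0 := by
  intro u hu
  refine (mv_adj hab).mpr (Or.inl ⟨hU u hu, ?_⟩)
  exact sym2_ne (fun h _ => hx h.symm) (fun h _ => hy h.symm)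

lemma trick {G : SimpleGraph V} {v0 x y z : V} (hU : Univ G v0) (hx : x ≠ v0) (hy : y ≠ v0)
    (hz : z ≠ v0) (hxy : G.Adj x y) (hnxz : ¬ G.Adj x z) (hxz : x ≠ z) :
    Relation.ReflTransGen EdgeSlide G (mv G x y x z) := by
  have hyz : y ≠ z := fun h => hnxz (h ▸ hxy)
  have hxy' : x ≠ y := hxy.ne
  have hxv0 : G.Adj x v0 := (hU x hx).symm
  have hs1 : EdgeSlide G (mv G x v0 x z) := slide_mv hxz hxv0 (hU z hz) hnxz
  have hG1xy : (mv G x v0 x z).Adj x y :=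
    (mv_adj hxz).mpr (Or.inl ⟨hxy, sym2_ne (fun _ h => hy h) (fun h _ => hx h)⟩)
  have hG1yv0 : (mv G x v0 x z).Adj y v0 :=
    (mv_adj hxz).mpr (Or.inl ⟨(hU y hy).symm, sym2_ne (fun h _ => hxy' h.symm) (fun h _ => hy h)⟩)
  have hG1nxv0 : ¬ (mv G x v0 x z).Adj x v0 := by
    rw [mv_adj hxz]
    rintro (⟨_, h⟩ | h)
    · exact h rfl
    · exact sym2_ne (fun _ h => hz h.symm) (fun h _ => hxz h) h
  have hs2 : EdgeSlide (mv G x v0 x z) (mv (mv G x v0 x z) x y x v0) :=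
    slide_mv hx hG1xy hG1yv0 hG1nxv0
  have heq : mv (mv G x v0 x z) x y x v0 = mv G x y x z := by
    apply SimpleGraph.edgeSet_inj.mp
    rw [mv_edgeSet _ _ _ hx, mv_edgeSet _ _ _ hxz, mv_edgeSet _ _ _ hxz]
    exact setI1 (G.mem_edgeSet.mpr hxv0)
      (sym2_ne (fun _ h => hy h) (fun h _ => hx h))
      (sym2_ne (fun _ h => hyz h) (fun h _ => hxz h))
  exact Relation.ReflTransGen.head hs1 (heq ▸ Relation.ReflTransGen.single hs2)

lemma move {G : SimpleGraph V} {v0 x y a b : V} (hU : Univ G v0) (hx : x ≠ v0) (hy : y ≠ v0)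
    (ha : a ≠ v0) (hb : b ≠ v0) (hxy : G.Adj x y) (hnab : ¬ G.Adj a b) (hab : a ≠ b) :
    Relation.ReflTransGen EdgeSlide G (mv G x y a b) := by
  have hxy' : x ≠ y := hxy.ne
  by_cases hax : a = x
  · obtain rfl := hax
    exact trick hU hx hy hb hxy hnab hab
  by_cases hbx : b = x
  · obtain rfl := hbx
    rw [mv_swap_right]
    exact trick hU hx hy ha hxy (fun h => hnab h.symm) (Ne.symm hax)
  by_cases hay : a = y
  · obtain rfl := hay
    rw [mv_swap_left]
    exact trick hU hy hx hb hxy.symm hnab hab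
  by_cases hby : b = y
  · obtain rfl := hby
    rw [mv_swap_left, mv_swap_right]
    exact trick hU hy hx ha hxy.symm (fun h => hnab h.symm) (Ne.symm hay)
  by_cases hya : G.Adj y a
  case neg =>
    have t1 := trick hU hy hx ha hxy.symm hya (Ne.symm hay)
    have hU1 : Univ (mv G y x y a) v0 := univ_mv hU hy hx (Ne.symm hay)
    have h1ay : (mv G y x y a).Adj a y := (mv_adj (Ne.symm hay)).mpr (Or.inr Sym2.eq_swap)
    have h1nab : ¬ (mv G y x y a).Adj a b := by
      rw [mv_adj (Ne.symm hay)]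
      rintro (⟨h, _⟩ | h)
      · exact hnab h
      · exact sym2_ne (fun h1 _ => hay h1) (fun _ h2 => hby h2) h
    have t2 := trick hU1 ha hy hb h1ay h1nab hab
    have heq : mv (mv G y x y a) a y a b = mv G x y a b := by
      apply SimpleGraph.edgeSet_inj.mp
      rw [mv_edgeSet _ _ _ hab, mv_edgeSet _ _ _ (Ne.symm hay), mv_edgeSet _ _ _ hab,
        show s(a, y) = s(y, a) from Sym2.eq_swap, show s(y, x) = s(x, y) from Sym2.eq_swap]
      exact setI2 (fun h => hya (G.mem_edgeSet.mp h))
    exact t1.trans (heq ▸ t2)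
  by_cases hxa : G.Adj x a
  case neg =>
    have t1 := trick hU hx hy ha hxy hxa (Ne.symm hax)
    have hU1 : Univ (mv G x y x a) v0 := univ_mv hU hx hy (Ne.symm hax)
    have h1ax : (mv G x y x a).Adj a x := (mv_adj (Ne.symm hax)).mpr (Or.inr Sym2.eq_swap)
    have h1nab : ¬ (mv G x y x a).Adj a b := by
      rw [mv_adj (Ne.symm hax)]
      rintro (⟨h, _⟩ | h)
      · exact hnab h
      · exact sym2_ne (fun h1 _ => hax h1) (fun _ h2 => hbx h2) h
    have t2 := trick hU1 ha hx hb h1ax h1nab hab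
    have heq : mv (mv G x y x a) a x a b = mv G x y a b := by
      apply SimpleGraph.edgeSet_inj.mp
      rw [mv_edgeSet _ _ _ hab, mv_edgeSet _ _ _ (Ne.symm hax), mv_edgeSet _ _ _ hab,
        show s(a, x) = s(x, a) from Sym2.eq_swap]
      exact setI2 (fun h => hxa (G.mem_edgeSet.mp h))
    exact t1.trans (heq ▸ t2)
  by_cases hxb : G.Adj x b
  case neg =>
    have t1 := trick hU hx hy hb hxy hxb (Ne.symm hbx)
    have hU1 : Univ (mv G x y x b) v0 := univ_mv hU hx hy (Ne.symm hbx)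
    have h1bx : (mv G x y x b).Adj b x := (mv_adj (Ne.symm hbx)).mpr (Or.inr Sym2.eq_swap)
    have h1nba : ¬ (mv G x y x b).Adj b a := by
      rw [mv_adj (Ne.symm hbx)]
      rintro (⟨h, _⟩ | h)
      · exact hnab h.symm
      · exact sym2_ne (fun h1 _ => hbx h1) (fun _ h2 => hax h2) h
    have t2 := trick hU1 hb hx ha h1bx h1nba (Ne.symm hab)
    have heq : mv (mv G x y x b) b x b a = mv G x y a b := by
      apply SimpleGraph.edgeSet_inj.mp
      rw [mv_edgeSet _ _ _ (Ne.symm hab), mv_edgeSet _ _ _ (Ne.symm hbx), mv_edgeSet _ _ _ hab,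
        show s(b, x) = s(x, b) from Sym2.eq_swap, show s(b, a) = s(a, b) from Sym2.eq_swap]
      exact setI2 (fun h => hxb (G.mem_edgeSet.mp h))
    exact t1.trans (heq ▸ t2)
  by_cases hyb : G.Adj y b
  case neg =>
    have t1 := trick hU hy hx hb hxy.symm hyb (Ne.symm hby)
    have hU1 : Univ (mv G y x y b) v0 := univ_mv hU hy hx (Ne.symm hby)
    have h1by : (mv G y x y b).Adj b y := (mv_adj (Ne.symm hby)).mpr (Or.inr Sym2.eq_swap)
    have h1nba : ¬ (mv G y x y b).Adj b a := by
      rw [mv_adj (Ne.symm hby)]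
      rintro (⟨h, _⟩ | h)
      · exact hnab h.symm
      · exact sym2_ne (fun h1 _ => hby h1) (fun _ h2 => hay h2) h
    have t2 := trick hU1 hb hy ha h1by h1nba (Ne.symm hab)
    have heq : mv (mv G y x y b) b y b a = mv G x y a b := by
      apply SimpleGraph.edgeSet_inj.mp
      rw [mv_edgeSet _ _ _ (Ne.symm hab), mv_edgeSet _ _ _ (Ne.symm hby), mv_edgeSet _ _ _ hab,
        show s(b, y) = s(y, b) from Sym2.eq_swap, show s(b, a) = s(a, b) from Sym2.eq_swap,
        show s(y, x) = s(x, y) from Sym2.eq_swap]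
      exact setI2 (fun h => hyb (G.mem_edgeSet.mp h))
    exact t1.trans (heq ▸ t2)
  case pos =>
    have s1 : EdgeSlide G (mv G a x a b) := slide_mv hab hxa.symm hxb hnab
    have hU1 : Univ (mv G a x a b) v0 := univ_mv hU ha hx hab
    have h1xy : (mv G a x a b).Adj x y :=
      (mv_adj hab).mpr (Or.inl ⟨hxy, sym2_ne (fun h _ => hax h.symm) (fun _ h => hay h.symm)⟩)
    have h1nxa : ¬ (mv G a x a b).Adj x a := by
      rw [mv_adj hab]
      rintro (⟨_, h⟩ | h)
      · exact h Sym2.eq_swap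
      · exact sym2_ne (fun h1 _ => hax h1.symm) (fun h1 _ => hbx h1.symm) h
    have t2 := trick hU1 hx hy ha h1xy h1nxa (Ne.symm hax)
    have heq : mv (mv G a x a b) x y x a = mv G x y a b := by
      apply SimpleGraph.edgeSet_inj.mp
      rw [mv_edgeSet _ _ _ (Ne.symm hax), mv_edgeSet _ _ _ hab, mv_edgeSet _ _ _ hab,
        show s(x, a) = s(a, x) from Sym2.eq_swap]
      exact setI1 (G.mem_edgeSet.mpr hxa.symm)
        (sym2_ne (fun h _ => hax h.symm) (fun _ h => hay h.symm))
        (sym2_ne (fun h _ => hax h.symm) (fun h _ => hbx h.symm))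
    exact Relation.ReflTransGen.head s1 (heq ▸ t2)

lemma phaseB [Finite V] (v0 : V) (H : SimpleGraph V) (hUH : Univ H v0) :
    ∀ (n : ℕ) (G : SimpleGraph V), Univ G v0 → G.edgeSet.ncard = H.edgeSet.ncard →
    (G.edgeSet \ H.edgeSet).ncard = n → Relation.ReflTransGen EdgeSlide G H := by
  intro n
  induction n using Nat.strong_induction_on with
  | _ n ih =>
  intro G hUG hcard hn
  by_cases hsub : G.edgeSet ⊆ H.edgeSet
  · have : G.edgeSet = H.edgeSet := Set.eq_of_subset_of_ncard_le hsub hcard.ge (Set.toFinite _)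
    rw [SimpleGraph.edgeSet_inj.mp this]
  · obtain ⟨e, heG, heH⟩ := Set.not_subset.mp hsub
    have hne : (H.edgeSet \ G.edgeSet).Nonempty := by
      by_contra h
      rw [Set.not_nonempty_iff_eq_empty, Set.diff_eq_empty] at h
      have := Set.eq_of_subset_of_ncard_le h hcard.le (Set.toFinite _)
      exact heH (this ▸ heG)
    obtain ⟨f, hfH, hfG⟩ := hne
    obtain ⟨⟨x, y⟩, rfl⟩ := e.exists_rep
    obtain ⟨⟨a, b⟩, rfl⟩ := f.exists_rep
    have hGxy : G.Adj x y := G.mem_edgeSet.mp heG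
    have hnHxy : ¬ H.Adj x y := fun h => heH (H.mem_edgeSet.mpr h)
    have hHab : H.Adj a b := H.mem_edgeSet.mp hfH
    have hnGab : ¬ G.Adj a b := fun h => hfG (G.mem_edgeSet.mpr h)
    have hx : x ≠ v0 := by
      rintro rfl
      exact hnHxy (hUH y hGxy.ne')
    have hy : y ≠ v0 := by
      rintro rfl
      exact hnHxy (hUH x hGxy.ne).symm
    have ha : a ≠ v0 := by
      rintro rfl
      exact hnGab (hUG b hHab.ne')
    have hb : b ≠ v0 := by
      rintro rfl
      exact hnGab (hUG a hHab.ne).symm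
    have hab : a ≠ b := hHab.ne
    have steps := move hUG hx hy ha hb hGxy hnGab hab
    have hU2 : Univ (mv G x y a b) v0 := univ_mv hUG hx hy hab
    have hcard2 : (mv G x y a b).edgeSet.ncard = H.edgeSet.ncard := by
      rw [mv_ncard hGxy hnGab hab, hcard]
    have hdiff : (mv G x y a b).edgeSet \ H.edgeSet = (G.edgeSet \ H.edgeSet) \ {s(x, y)} := by
      rw [mv_edgeSet _ _ _ hab]
      exact setI3 hfH
    have hlt : ((mv G x y a b).edgeSet \ H.edgeSet).ncard < n := by
      rw [hdiff, ← hn]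
      exact Set.ncard_diff_singleton_lt_of_mem ⟨heG, heH⟩
    exact steps.trans (ih _ hlt (mv G x y a b) hU2 hcard2 rfl)

lemma slide_equiv [Finite V] {G H : SimpleGraph V} (hG : G.Connected) (hH : H.Connected)
    (hcard : G.edgeSet.ncard = H.edgeSet.ncard) : Relation.ReflTransGen EdgeSlide G H := by
  obtain ⟨v0⟩ := hG.nonempty
  obtain ⟨G', hGsteps, _, hUG⟩ := phaseA v0 _ G hG rfl
  obtain ⟨H', hHsteps, _, hUH⟩ := phaseA v0 _ H hH rfl
  have hc' : G'.edgeSet.ncard = H'.edgeSet.ncard := by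
    rw [rtg_ncard hGsteps, rtg_ncard hHsteps, hcard]
  exact hGsteps.trans ((phaseB v0 H' hUH _ G' hUG hc' rfl).trans (rtg_symm hHsteps))

end EdgeSlideAux

theorem prescribed_configuration {V W : Type*} [Fintype V] [Fintype W]
    (G : SimpleGraph V) (S : SimpleGraph W)
    (hG : G.Connected) (hS : S.Connected)
    (ψ : V ≃ W)
    (hE : Nat.card G.edgeSet = Nat.card S.edgeSet) :
    ∃ G' : SimpleGraph V, Relation.ReflTransGen EdgeSlide G G' ∧
      ∀ x y : V, G'.Adj x y ↔ S.Adj (ψ x) (ψ y) := by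
  have iso : S.comap ⇑ψ ≃g S := ⟨ψ, Iff.rfl⟩
  have hH : (S.comap ⇑ψ).Connected := iso.connected_iff.mpr hS
  have hcard : G.edgeSet.ncard = (S.comap ⇑ψ).edgeSet.ncard := by
    rw [← Nat.card_coe_set_eq, ← Nat.card_coe_set_eq, hE]
    exact (Nat.card_congr iso.mapEdgeSet).symm
  exact ⟨S.comap ⇑ψ, EdgeSlideAux.slide_equiv hG hH hcard, fun x y => Iff.rfl⟩
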